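/- Let k ≥ 2 and let d : ℤ^{2k} → ℤ⁵ be the linear map sending the first standard basis vector to f₁ + f₄, the second to f₂ + f₅, the basis vectors e₃,…,e_{k+1} each to f₃ + f₄, and the basis vectors e_{k+2},…,e_{2k} each to f₃ + f₅ (where f₁,…,f₅ is the standard basis of ℤ⁵). Then the image of d is free of rank 4 and the kernel of d is free of rank 2k − 4. -/

import Mathlib

/-- The four distinct column vectors of the matrix `D`. -/
def vcol5 (a : Fin 4) : Fin 5 → ℤ := fun i =>
  if (a : ℕ) = 0 then (if (i : ℕ) = 0 ∨ (i : ℕ) = 3 then 1 else 0)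
  else if (a : ℕ) = 1 then (if (i : ℕ) = 1 ∨ (i : ℕ) = 4 then 1 else 0)
  else if (a : ℕ) = 2 then (if (i : ℕ) = 2 ∨ (i : ℕ) = 3 then 1 else 0)
  else (if (i : ℕ) = 2 ∨ (i : ℕ) = 4 then 1 else 0)

lemma vcol5_li : LinearIndependent ℤ vcol5 := by
  rw [Fintype.linearIndependent_iff]
  intro g hg
  have h0 := congrFun hg 0
  have h1 := congrFun hg 1
  have h3 := congrFun hg 3
  have h4 := congrFun hg 4
  simp [Fin.sum_univ_four, vcol5] at h0 h1 h3 h4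
  intro i
  fin_cases i <;> simp <;> omega

/-- A finite free ℤ-module of rank n is linearly equivalent to `Fin n → ℤ`. -/
lemma equiv_of_finrank {M : Type*} [AddCommGroup M] [Module ℤ M] [Module.Free ℤ M]
    [Module.Finite ℤ M] {n : ℕ} (h : Module.finrank ℤ M = n) :
    Nonempty (M ≃ₗ[ℤ] (Fin n → ℤ)) :=
  ⟨(Module.finBasisOfFinrankEq ℤ M h).equivFun⟩

/-- For k ≥ 2, the map d : ℤ^{2k} → ℤ⁵ sending e₁ ↦ f₁+f₄, e₂ ↦ f₂+f₅,
e₃,…,e_{k+1} ↦ f₃+f₄ and e_{k+2},…,e_{2k} ↦ f₃+f₅ has image free of rank 4 and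
kernel free of rank 2k − 4.  (Columns are indexed by `Fin (2*k)` with `j = 0`
corresponding to e₁, and rows by `Fin 5` with `i = 0` corresponding to f₁.) -/
theorem stmt5 (k : ℕ) (hk : 2 ≤ k) (D : Matrix (Fin 5) (Fin (2 * k)) ℤ)
    (hD : ∀ i j, D i j =
      if (j : ℕ) = 0 then (if (i : ℕ) = 0 ∨ (i : ℕ) = 3 then 1 else 0)
      else if (j : ℕ) = 1 then (if (i : ℕ) = 1 ∨ (i : ℕ) = 4 then 1 else 0)
      else if (j : ℕ) ≤ k then (if (i : ℕ) = 2 ∨ (i : ℕ) = 3 then 1 else 0)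
      else (if (i : ℕ) = 2 ∨ (i : ℕ) = 4 then 1 else 0)) :
    Nonempty (↥(LinearMap.range D.mulVecLin) ≃ₗ[ℤ] (Fin 4 → ℤ)) ∧
      Nonempty (↥(LinearMap.ker D.mulVecLin) ≃ₗ[ℤ] (Fin (2 * k - 4) → ℤ)) := by
  -- every column of D is one of the four vectors
  have hcol : ∀ j : Fin (2 * k), D.transpose j ∈ Set.range vcol5 := by
    intro j
    by_cases hj0 : (j : ℕ) = 0
    · exact ⟨0, by funext i; simp [vcol5, Matrix.transpose_apply, hD, hj0]⟩
    by_cases hj1 : (j : ℕ) = 1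
    · exact ⟨1, by funext i; simp [vcol5, Matrix.transpose_apply, hD, hj0, hj1]⟩
    by_cases hjk : (j : ℕ) ≤ k
    · refine ⟨2, ?_⟩
      funext i
      show (if ((2 : Fin 4) : ℕ) = 0 then _ else _) = _
      norm_num [Matrix.transpose_apply, hD, hj0, hj1, hjk]
    · refine ⟨3, ?_⟩
      funext i
      show (if ((3 : Fin 4) : ℕ) = 0 then _ else _) = _
      norm_num [show ((3 : Fin 4) : ℕ) = 3 from rfl, Matrix.transpose_apply, hD, hj0, hj1, hjk]
  -- and each of the four vectors appears as a column
  have hvc : ∀ a : Fin 4, vcol5 a ∈ Set.range D.transpose := by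
    intro a
    fin_cases a
    · exact ⟨⟨0, by omega⟩, by funext i; simp [vcol5, hD]⟩
    · exact ⟨⟨1, by omega⟩, by funext i; simp [vcol5, hD]⟩
    · refine ⟨⟨2, by omega⟩, ?_⟩
      funext i
      simp [vcol5, Matrix.transpose_apply, hD]
      omega
    · refine ⟨⟨k + 1, by omega⟩, ?_⟩
      funext i
      have h1 : ¬ (k + 1 = 0) := by omega
      have h2 : ¬ (k + 1 = 1) := by omega
      have h3 : ¬ (k + 1 ≤ k) := by omega
      have h4 : ¬ (k = 0) := by omega
      simp [vcol5, Matrix.transpose_apply, hD, h1, h2, h3, h4]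
  have hrange : LinearMap.range D.mulVecLin = Submodule.span ℤ (Set.range vcol5) := by
    rw [Matrix.range_mulVecLin]
    apply le_antisymm
    · exact Submodule.span_le.mpr fun x ⟨j, hj⟩ => hj ▸ Submodule.subset_span (hcol j)
    · exact Submodule.span_le.mpr fun x ⟨a, ha⟩ => ha ▸ Submodule.subset_span (hvc a)
  -- finrank of the range is 4
  have hfr : Module.finrank ℤ ↥(LinearMap.range D.mulVecLin) = 4 := by
    rw [hrange]
    have := Module.finrank_eq_card_basis (Module.Basis.span vcol5_li)
    simpa using this
  refine ⟨equiv_of_finrank hfr, ?_⟩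
  -- rank-nullity over ℤ
  have hrn := LinearMap.rank_range_add_rank_ker D.mulVecLin
  have hR : Module.rank ℤ ↥(LinearMap.range D.mulVecLin) =
      (Module.finrank ℤ ↥(LinearMap.range D.mulVecLin) : Cardinal) :=
    (Module.finrank_eq_rank ℤ _).symm
  have hK : Module.rank ℤ ↥(LinearMap.ker D.mulVecLin) =
      (Module.finrank ℤ ↥(LinearMap.ker D.mulVecLin) : Cardinal) :=
    (Module.finrank_eq_rank ℤ _).symm
  have htot : Module.rank ℤ (Fin (2 * k) → ℤ) = ((2 * k : ℕ) : Cardinal) := by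
    simp [rank_fin_fun]
  rw [hR, hK, htot, hfr] at hrn
  have hnat : 4 + Module.finrank ℤ ↥(LinearMap.ker D.mulVecLin) = 2 * k := by
    have h : ((4 + Module.finrank ℤ ↥(LinearMap.ker D.mulVecLin) : ℕ) : Cardinal.{0})
        = ((2 * k : ℕ) : Cardinal.{0}) := by push_cast; exact_mod_cast hrn
    exact_mod_cast h
  exact equiv_of_finrank (by omega)
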